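/- Let x be a billiard solution of the one-dimensional impulsive Cauchy problem with initial velocity v satisfying |v| > ∫₀ᵀ m(s) ds, and let t₁ < t₂ < … < t_k be its impact times. Then x(t_i)·x(t_{i+1}) < 0 for every i = 1, …, k−1; that is, each two consecutive impact points lie on opposite endpoints of the interval [−a, a]. -/

import Mathlib

open Set MeasureTheory Filter Topology

/-- The set of impact times of a trajectory `x` on the time interval `(0, T]`
in the one-dimensional billiard table `K = [-a, a]`. -/
def impactSet (T a : ℝ) (x : ℝ → ℝ) : Set ℝ :=
  {t | t ∈ Set.Ioc 0 T ∧ |x t| = a}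

/-- A billiard solution of the one-dimensional impulsive Cauchy problem
`x'' = f(t, x)` in `K = [-a, a]`, `x(0) = 0`, with initial velocity `v` and the
elastic reflection law `x'(s+) = -x'(s-)` at impact times `s < T`.

The function `xd` plays the role of the derivative of `x` away from the (finitely
many) impact times; on each connected component of `[0, T]` minus the impact set it
is absolutely continuous with `xd' = f(t, x(t))` a.e., which is expressed by the
integral identity `accel`.  One-sided limits of `xd` at impact times exist
(`leftLimExists`, and `reflect` then yields the right limits), and the reflection
law is `reflect`. -/
structure BilliardSol (T a : ℝ) (f : ℝ → ℝ → ℝ) (v : ℝ) where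
  x : ℝ → ℝ
  xd : ℝ → ℝ
  cont : ContinuousOn x (Set.Icc 0 T)
  init : x 0 = 0
  confined : ∀ t ∈ Set.Icc 0 T, |x t| ≤ a
  finImpacts : (impactSet T a x).Finite
  hasDeriv : ∀ t ∈ Set.Icc 0 T \ impactSet T a x,
      HasDerivWithinAt x (xd t) (Set.Icc 0 T) t
  initVel : xd 0 = v
  accel : ∀ s u : ℝ, s ∈ Set.Icc 0 T → u ∈ Set.Icc 0 T → s ≤ u →
      (∀ τ ∈ Set.Icc s u, τ ∉ impactSet T a x) →
      xd u = xd s + ∫ τ in s..u, f τ (x τ)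
  leftLimExists : ∀ s ∈ impactSet T a x,
      ∃ L : ℝ, Filter.Tendsto xd (nhdsWithin s (Set.Iio s \ impactSet T a x)) (nhds L)
  reflect : ∀ s ∈ impactSet T a x, s < T → ∀ L : ℝ,
      Filter.Tendsto xd (nhdsWithin s (Set.Iio s \ impactSet T a x)) (nhds L) →
      Filter.Tendsto xd (nhdsWithin s (Set.Ioi s \ impactSet T a x)) (nhds (-L))

/-- Auxiliary: the interval integral of `g` is bounded in absolute value by that of a
pointwise dominating nonnegative integrable function `m`, with no integrability
assumption on `g` (the Bochner integral of a non-integrable function is zero). -/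
lemma abs_intInt_le (g m : ℝ → ℝ) {r t : ℝ} (hrt : r ≤ t)
    (hm : IntervalIntegrable m volume r t)
    (hm0 : ∀ τ ∈ Set.Icc r t, 0 ≤ m τ)
    (hb : ∀ τ ∈ Set.Icc r t, |g τ| ≤ m τ) :
    |∫ τ in r..t, g τ| ≤ ∫ τ in r..t, m τ := by
  by_cases hg : IntervalIntegrable g volume r t
  · refine (intervalIntegral.abs_integral_le_integral_abs hrt).trans ?_
    exact intervalIntegral.integral_mono_on hrt hg.abs hm hb
  · rw [intervalIntegral.integral_undef hg]
    simpa using intervalIntegral.integral_nonneg hrt hm0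

/-- for a billiard solution with initial speed larger than
`∫₀ᵀ m`, any two consecutive impact points lie on opposite endpoints of
`[-a, a]`, i.e. `x(tᵢ) * x(tᵢ₊₁) < 0`. -/
theorem consecutive_impacts_opposite
    (T a : ℝ) (hT : 0 < T) (ha : 0 < a)
    (f : ℝ → ℝ → ℝ) (m : ℝ → ℝ)
    -- (H1): `f` is a Carathéodory function, integrably bounded by `m`
    (hf_meas : ∀ y : ℝ, Measurable fun t => f t y)
    (hf_cont : ∀ᵐ t ∂(volume : Measure ℝ), t ∈ Set.Icc 0 T → Continuous fun y => f t y)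
    (hm_int : IntervalIntegrable m volume 0 T)
    (hm_nonneg : ∀ t ∈ Set.Icc 0 T, 0 ≤ m t)
    (hf_bound : ∀ t ∈ Set.Icc 0 T, ∀ y : ℝ, |f t y| ≤ m t)
    (v : ℝ) (hv : (∫ s in (0:ℝ)..T, m s) < |v|)
    (X : BilliardSol T a f v) :
    ∀ s ∈ impactSet T a X.x, ∀ u ∈ impactSet T a X.x, s < u →
      (∀ τ ∈ Set.Ioo s u, τ ∉ impactSet T a X.x) →
      X.x s * X.x u < 0 := by
  classical
  set S := impactSet T a X.x with hSdef
  set g : ℝ → ℝ := fun τ => f τ (X.x τ) with hgdef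
  set F : ℝ → ℝ := fun r => ∫ τ in (0:ℝ)..r, m τ with hFdef
  have hSsub : S ⊆ Set.Ioc 0 T := fun t ht => ht.1
  have hSfin : S.Finite := X.finImpacts
  -- integrability of `m` on subintervals
  have hmsub : ∀ {r t : ℝ}, 0 ≤ r → r ≤ t → t ≤ T → IntervalIntegrable m volume r t := by
    intro r t h0 hrt htT
    refine hm_int.mono_set ?_
    rw [Set.uIcc_of_le hrt, Set.uIcc_of_le hT.le]
    exact Set.Icc_subset_Icc h0 htT
  have hFadd : ∀ {r t : ℝ}, 0 ≤ r → r ≤ t → t ≤ T →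
      F r + ∫ τ in r..t, m τ = F t := by
    intro r t h0 hrt htT
    exact intervalIntegral.integral_add_adjacent_intervals
      (hmsub le_rfl h0 (hrt.trans htT)) (hmsub h0 hrt htT)
  have hFmono : ∀ {r t : ℝ}, 0 ≤ r → r ≤ t → t ≤ T → F r ≤ F t := by
    intro r t h0 hrt htT
    have h := hFadd h0 hrt htT
    have h2 : 0 ≤ ∫ τ in r..t, m τ :=
      intervalIntegral.integral_nonneg hrt
        (fun τ hτ => hm_nonneg τ ⟨h0.trans hτ.1, hτ.2.trans htT⟩)
    linarith
  have hFcont : ContinuousOn F (Set.Icc 0 T) := by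
    have h := intervalIntegral.continuousOn_primitive_interval' hm_int
      (Set.left_mem_uIcc (a := (0:ℝ)) (b := T))
    rwa [Set.uIcc_of_le hT.le] at h
  -- key bound on |∫ g|
  have hgbound : ∀ {r t : ℝ}, 0 ≤ r → r ≤ t → t ≤ T →
      |∫ τ in r..t, g τ| ≤ F t - F r := by
    intro r t h0 hrt htT
    have h1 := abs_intInt_le g m hrt (hmsub h0 hrt htT)
      (fun τ hτ => hm_nonneg τ ⟨h0.trans hτ.1, hτ.2.trans htT⟩)
      (fun τ hτ => hf_bound τ ⟨h0.trans hτ.1, hτ.2.trans htT⟩ _)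
    have h2 := hFadd h0 hrt htT
    linarith
  -- the speed lower bound, by induction on the number of impacts before `t`
  have key : ∀ n : ℕ, ∀ t : ℝ, (S ∩ Set.Icc 0 t).ncard ≤ n →
      t ∈ Set.Icc 0 T → t ∉ S → |v| ≤ |X.xd t| + F t := by
    have base : ∀ t : ℝ, t ∈ Set.Icc 0 T → (∀ τ ∈ Set.Icc 0 t, τ ∉ S) →
        |v| ≤ |X.xd t| + F t := by
      intro t ht hnone
      have hacc := X.accel 0 t ⟨le_rfl, hT.le⟩ ht ht.1 hnone
      rw [X.initVel] at hacc
      have hb := hgbound le_rfl ht.1 ht.2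
      have h0 : F 0 = 0 := by simp [hFdef]
      have : |v| = |X.xd t - ∫ τ in (0:ℝ)..t, g τ| := by rw [hacc]; simp only [hgdef]; ring_nf
      calc |v| = |X.xd t - ∫ τ in (0:ℝ)..t, g τ| := this
        _ ≤ |X.xd t| + |∫ τ in (0:ℝ)..t, g τ| := abs_sub _ _
        _ ≤ |X.xd t| + F t := by rw [h0] at hb; linarith
    intro n
    induction n with
    | zero =>
      intro t hcard ht htS
      refine base t ht ?_
      intro τ hτ hτS
      have hfin : (S ∩ Set.Icc 0 t).Finite := hSfin.inter_of_left _
      have hempty : (S ∩ Set.Icc 0 t) = ∅ := by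
        rw [← Set.ncard_eq_zero hfin]; omega
      exact (Set.eq_empty_iff_forall_notMem.1 hempty τ) ⟨hτS, hτ⟩
    | succ n ih =>
      intro t hcard ht htS
      set A := S ∩ Set.Icc 0 t with hAdef
      have hAfin : A.Finite := hSfin.inter_of_left _
      by_cases hAe : A = ∅
      · refine base t ht ?_
        intro τ hτ hτS
        exact (Set.mem_empty_iff_false τ).mp (hAe ▸ (⟨hτS, hτ⟩ : τ ∈ A))
      · have hAne : A.Nonempty := Set.nonempty_iff_ne_empty.2 hAe
        obtain ⟨s₀, hs₀A, hs₀max⟩ := Set.exists_max_image A id hAfin hAne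
        have hs₀S : s₀ ∈ S := hs₀A.1
        have hs₀pos : 0 < s₀ := (hSsub hs₀S).1
        have hs₀t : s₀ < t := lt_of_le_of_ne hs₀A.2.2 (fun h => htS (h ▸ hs₀S))
        have hs₀T : s₀ < T := lt_of_lt_of_le hs₀t ht.2
        obtain ⟨L, hL⟩ := X.leftLimExists s₀ hs₀S
        have hR := X.reflect s₀ hs₀S hs₀T L hL
        -- the two one-sided filters are nontrivial
        have hUmem : ((S \ {s₀}) : Set ℝ)ᶜ ∈ 𝓝 s₀ :=
          ((hSfin.subset Set.diff_subset).isClosed.isOpen_compl).mem_nhds (by simp)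
        have hleq : 𝓝[Set.Iio s₀ \ S] s₀ = 𝓝[Set.Iio s₀] s₀ := by
          have hset : Set.Iio s₀ ∩ ((S \ {s₀}) : Set ℝ)ᶜ = Set.Iio s₀ \ S := by
            ext r
            simp only [Set.mem_inter_iff, Set.mem_compl_iff, Set.mem_diff,
              Set.mem_singleton_iff, Set.mem_Iio, not_and, not_not]
            constructor
            · rintro ⟨hr, h2⟩
              exact ⟨hr, fun hrS => absurd (h2 hrS) (ne_of_lt hr)⟩
            · rintro ⟨hr, h2⟩
              exact ⟨hr, fun hrS => absurd hrS h2⟩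
          rw [← hset, Set.inter_comm, nhdsWithin_inter_of_mem
            (mem_nhdsWithin_of_mem_nhds hUmem)]
        have hreq : 𝓝[Set.Ioi s₀ \ S] s₀ = 𝓝[Set.Ioi s₀] s₀ := by
          have hset : Set.Ioi s₀ ∩ ((S \ {s₀}) : Set ℝ)ᶜ = Set.Ioi s₀ \ S := by
            ext r
            simp only [Set.mem_inter_iff, Set.mem_compl_iff, Set.mem_diff,
              Set.mem_singleton_iff, Set.mem_Ioi, not_and, not_not]
            constructor
            · rintro ⟨hr, h2⟩
              exact ⟨hr, fun hrS => absurd (h2 hrS) (ne_of_gt hr)⟩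
            · rintro ⟨hr, h2⟩
              exact ⟨hr, fun hrS => absurd hrS h2⟩
          rw [← hset, Set.inter_comm, nhdsWithin_inter_of_mem
            (mem_nhdsWithin_of_mem_nhds hUmem)]
        have hlne : (𝓝[Set.Iio s₀ \ S] s₀).NeBot := by rw [hleq]; infer_instance
        have hrne : (𝓝[Set.Ioi s₀ \ S] s₀).NeBot := by rw [hreq]; infer_instance
        -- continuity of F at s₀
        have hFs₀ : ContinuousAt F s₀ :=
          hFcont.continuousAt (Icc_mem_nhds hs₀pos hs₀T)
        -- left bound : |v| ≤ |L| + F s₀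
        have hLb : |v| ≤ |L| + F s₀ := by
          have ev1 : ∀ᶠ r in 𝓝[Set.Iio s₀ \ S] s₀, |v| ≤ |X.xd r| + F r := by
            have evmem : ∀ᶠ r in 𝓝[Set.Iio s₀ \ S] s₀, r ∈ Set.Iio s₀ \ S :=
              eventually_mem_nhdsWithin
            have evpos : ∀ᶠ r in 𝓝[Set.Iio s₀ \ S] s₀, (0:ℝ) < r :=
              eventually_nhdsWithin_of_eventually_nhds (eventually_gt_nhds hs₀pos)
            filter_upwards [evmem, evpos] with r hr hrpos
            refine ih r ?_ ⟨hrpos.le, (le_of_lt hr.1).trans hs₀T.le⟩ hr.2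
            have hsub : S ∩ Set.Icc 0 r ⊆ A \ {s₀} := by
              rintro τ ⟨hτS, hτ0, hτr⟩
              refine ⟨⟨hτS, hτ0, hτr.trans (le_of_lt (hr.1.trans hs₀t))⟩, ?_⟩
              simp only [Set.mem_singleton_iff]
              intro hτ; subst hτ
              exact absurd hτr (not_le.2 hr.1)
            have h1 : (S ∩ Set.Icc 0 r).ncard ≤ (A \ {s₀}).ncard :=
              Set.ncard_le_ncard hsub hAfin.diff
            have h2 : (A \ {s₀}).ncard = A.ncard - 1 :=
              Set.ncard_diff_singleton_of_mem hs₀A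
            omega
          have hlim : Tendsto (fun r => |X.xd r| + F r) (𝓝[Set.Iio s₀ \ S] s₀)
              (𝓝 (|L| + F s₀)) :=
            hL.abs.add ((hFs₀.tendsto).mono_left nhdsWithin_le_nhds)
          exact ge_of_tendsto hlim ev1
        -- right bound : |L| ≤ |xd t| + (F t - F s₀)
        have hRb : |L| ≤ |X.xd t| + (F t - F s₀) := by
          have ev2 : ∀ᶠ r in 𝓝[Set.Ioi s₀ \ S] s₀,
              |X.xd r| ≤ |X.xd t| + (F t - F s₀) := by
            have evmem : ∀ᶠ r in 𝓝[Set.Ioi s₀ \ S] s₀, r ∈ Set.Ioi s₀ \ S :=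
              eventually_mem_nhdsWithin
            have evlt : ∀ᶠ r in 𝓝[Set.Ioi s₀ \ S] s₀, r < t :=
              eventually_nhdsWithin_of_eventually_nhds (eventually_lt_nhds hs₀t)
            filter_upwards [evmem, evlt] with r hr hrt
            have hr0 : 0 ≤ r := (hs₀pos.trans hr.1).le
            have hnone : ∀ τ ∈ Set.Icc r t, τ ∉ S := by
              intro τ hτ hτS
              have hτA : τ ∈ A := ⟨hτS, hr0.trans hτ.1, hτ.2⟩
              have := hs₀max τ hτA
              have : τ ≤ s₀ := this
              have : s₀ < τ := lt_of_lt_of_le hr.1 hτ.1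
              linarith [hs₀max τ hτA]
            have hacc := X.accel r t ⟨hr0, hrt.le.trans ht.2⟩ ht hrt.le hnone
            have hb := hgbound hr0 hrt.le ht.2
            have hFr : F s₀ ≤ F r := hFmono hs₀pos.le hr.1.le (hrt.le.trans ht.2)
            have h1 : |X.xd r| = |X.xd t - ∫ τ in r..t, g τ| := by rw [hacc]; simp only [hgdef]; ring_nf
            calc |X.xd r| = |X.xd t - ∫ τ in r..t, g τ| := h1
              _ ≤ |X.xd t| + |∫ τ in r..t, g τ| := abs_sub _ _
              _ ≤ |X.xd t| + (F t - F r) := by linarith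
              _ ≤ |X.xd t| + (F t - F s₀) := by linarith
          have hlim2 : Tendsto (fun r => |X.xd r|) (𝓝[Set.Ioi s₀ \ S] s₀) (𝓝 |L|) := by
            have := hR.abs
            simpa using this
          exact le_of_tendsto hlim2 ev2
        have hFst : F s₀ ≤ F t := hFmono hs₀pos.le hs₀t.le ht.2
        linarith
  -- the uniform speed bound on non impact times
  have hspeed : ∀ t : ℝ, t ∈ Set.Icc 0 T → t ∉ S → |v| - F T ≤ |X.xd t| := by
    intro t ht htS
    have h1 := key (S ∩ Set.Icc 0 t).ncard t le_rfl ht htS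
    have h2 : F t ≤ F T := hFmono ht.1 ht.2 le_rfl
    have hvF : F T < |v| := hv
    linarith
  have hcpos : 0 < |v| - F T := by
    have : F T < |v| := hv
    linarith
  -- main argument
  intro s hsS u huS hsu hbetween
  have hs0 : 0 < s := (hSsub hsS).1
  have huT : u ≤ T := (hSsub huS).2
  have hIoosub : Set.Ioo s u ⊆ Set.Icc 0 T := fun t ht =>
    ⟨(hs0.trans ht.1).le, ht.2.le.trans huT⟩
  have hIooS : ∀ t ∈ Set.Ioo s u, t ∉ S := hbetween
  have hspeed' : ∀ t ∈ Set.Ioo s u, |v| - F T ≤ |X.xd t| := fun t ht =>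
    hspeed t (hIoosub ht) (hIooS t ht)
  have hne0 : ∀ t ∈ Set.Ioo s u, X.xd t ≠ 0 := by
    intro t ht h0
    have := hspeed' t ht
    rw [h0] at this
    simp at this
    linarith
  -- continuity of xd on Ioo s u
  have hxdcont : ContinuousOn X.xd (Set.Ioo s u) := by
    intro t₀ ht₀
    have hdist : ∀ r ∈ Set.Ioo s u, |X.xd r - X.xd t₀| ≤ |F r - F t₀| := by
      intro r hr
      rcases le_total t₀ r with h | h
      · have hnone : ∀ τ ∈ Set.Icc t₀ r, τ ∉ S := fun τ hτ =>
          hIooS τ ⟨lt_of_lt_of_le ht₀.1 hτ.1, lt_of_le_of_lt hτ.2 hr.2⟩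
        have hacc := X.accel t₀ r (hIoosub ht₀) (hIoosub hr) h hnone
        have hb := hgbound (hIoosub ht₀).1 h (hIoosub hr).2
        have h1 : |X.xd r - X.xd t₀| = |∫ τ in t₀..r, g τ| := by rw [hacc]; simp only [hgdef]; ring_nf
        rw [h1]
        exact hb.trans (le_abs_self _)
      · have hnone : ∀ τ ∈ Set.Icc r t₀, τ ∉ S := fun τ hτ =>
          hIooS τ ⟨lt_of_lt_of_le hr.1 hτ.1, lt_of_le_of_lt hτ.2 ht₀.2⟩
        have hacc := X.accel r t₀ (hIoosub hr) (hIoosub ht₀) h hnone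
        have hb := hgbound (hIoosub hr).1 h (hIoosub ht₀).2
        have h1 : |X.xd r - X.xd t₀| = |∫ τ in r..t₀, g τ| := by
          rw [hacc]; simp only [hgdef]; rw [abs_sub_comm]; ring_nf
        rw [h1]
        exact hb.trans (by rw [abs_sub_comm]; exact le_abs_self _)
      -- end
    have hFt₀ : ContinuousAt F t₀ :=
      hFcont.continuousAt (Icc_mem_nhds (hs0.trans ht₀.1) (lt_of_lt_of_le ht₀.2 huT))
    have hFten : Tendsto (fun r => |F r - F t₀|) (𝓝[Set.Ioo s u] t₀) (𝓝 0) := by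
      have h1 : Tendsto (fun r => F r - F t₀) (𝓝 t₀) (𝓝 (F t₀ - F t₀)) :=
        hFt₀.tendsto.sub tendsto_const_nhds
      have h2 : Tendsto (fun r => |F r - F t₀|) (𝓝 t₀) (𝓝 0) := by
        simpa using h1.abs
      exact h2.mono_left nhdsWithin_le_nhds
    have hzero : Tendsto (fun r => |X.xd r - X.xd t₀|) (𝓝[Set.Ioo s u] t₀) (𝓝 0) := by
      refine squeeze_zero' ?_ ?_ hFten
      · filter_upwards with r using abs_nonneg _
      · filter_upwards [eventually_mem_nhdsWithin] with r hr using hdist r hr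
    have : Tendsto X.xd (𝓝[Set.Ioo s u] t₀) (𝓝 (X.xd t₀)) := by
      rw [tendsto_iff_dist_tendsto_zero]
      simpa [Real.dist_eq] using hzero
    exact this
  -- the derivative has constant sign on (s,u)
  have hsame : ∀ t₁ ∈ Set.Ioo s u, ∀ t₂ ∈ Set.Ioo s u, 0 < X.xd t₁ → 0 < X.xd t₂ := by
    intro t₁ h₁ t₂ h₂ hpos
    by_contra hle
    have hneg : X.xd t₂ < 0 := lt_of_le_of_ne (not_lt.1 hle) (hne0 t₂ h₂)
    rcases le_total t₁ t₂ with h | h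
    · have hsubset : Set.Icc t₁ t₂ ⊆ Set.Ioo s u := Set.Icc_subset_Ioo h₁.1 h₂.2
      have := intermediate_value_Icc' h (hxdcont.mono hsubset)
      have h0mem : (0:ℝ) ∈ Set.Icc (X.xd t₂) (X.xd t₁) := ⟨hneg.le, hpos.le⟩
      obtain ⟨r, hr, hr0⟩ := this h0mem
      exact hne0 r (hsubset hr) hr0
    · have hsubset : Set.Icc t₂ t₁ ⊆ Set.Ioo s u := Set.Icc_subset_Ioo h₂.1 h₁.2
      have := intermediate_value_Icc h (hxdcont.mono hsubset)
      have h0mem : (0:ℝ) ∈ Set.Icc (X.xd t₂) (X.xd t₁) := ⟨hneg.le, hpos.le⟩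
      obtain ⟨r, hr, hr0⟩ := this h0mem
      exact hne0 r (hsubset hr) hr0
  -- derivative facts
  have hD : ∀ t ∈ Set.Ioo s u, HasDerivAt X.x (X.xd t) t := by
    intro t ht
    have h1 : HasDerivWithinAt X.x (X.xd t) (Set.Icc 0 T) t :=
      X.hasDeriv t ⟨hIoosub ht, hIooS t ht⟩
    exact h1.hasDerivAt (Icc_mem_nhds (hs0.trans ht.1) (lt_of_lt_of_le ht.2 huT))
  have hsIcc : s ∈ Set.Icc 0 T := ⟨hs0.le, (hsu.le.trans huT)⟩
  have huIcc : u ∈ Set.Icc 0 T := ⟨(hs0.trans hsu).le, huT⟩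
  have hcontx : ContinuousOn X.x (Set.Icc s u) :=
    X.cont.mono (Set.Icc_subset_Icc hs0.le huT)
  -- x s ≠ x u by strict monotonicity
  set t₀ : ℝ := (s + u) / 2 with ht₀def
  have ht₀mem : t₀ ∈ Set.Ioo s u := ⟨by linarith, by linarith⟩
  have hxne : X.x s ≠ X.x u := by
    rcases lt_or_gt_of_ne (hne0 t₀ ht₀mem) with hneg | hpos
    · -- xd < 0 on Ioo s u, strictly decreasing
      have hallneg : ∀ t ∈ Set.Ioo s u, X.xd t < 0 := by
        intro t ht
        rcases lt_or_gt_of_ne (hne0 t ht) with h | h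
        · exact h
        · exact absurd (hsame t ht t₀ ht₀mem h) (not_lt.2 hneg.le)
      have hanti : StrictAntiOn X.x (Set.Icc s u) := by
        refine strictAntiOn_of_deriv_neg (convex_Icc s u) hcontx ?_
        intro t ht
        rw [interior_Icc] at ht
        rw [(hD t ht).deriv]
        exact hallneg t ht
      exact ne_of_gt (hanti ⟨le_rfl, hsu.le⟩ ⟨hsu.le, le_rfl⟩ hsu)
    · have hallpos : ∀ t ∈ Set.Ioo s u, 0 < X.xd t := by
        intro t ht
        exact hsame t₀ ht₀mem t ht hpos
      have hmono : StrictMonoOn X.x (Set.Icc s u) := by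
        refine strictMonoOn_of_deriv_pos (convex_Icc s u) hcontx ?_
        intro t ht
        rw [interior_Icc] at ht
        rw [(hD t ht).deriv]
        exact hallpos t ht
      exact ne_of_lt (hmono ⟨le_rfl, hsu.le⟩ ⟨hsu.le, le_rfl⟩ hsu)
  -- conclude
  have hxs : |X.x s| = a := hsS.2
  have hxu : |X.x u| = a := huS.2
  rcases (abs_eq ha.le).1 hxs with h1 | h1 <;>
    rcases (abs_eq ha.le).1 hxu with h2 | h2
  · exact absurd (h1.trans h2.symm) hxne
  · rw [h1, h2]; nlinarith
  · rw [h1, h2]; nlinarith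
  · exact absurd (h1.trans h2.symm) hxne
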